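/- Let x₁,…,x_N and p₁,…,p_N be points of ℝⁿ, and set μ₀ := (1/N)Σ_{i=1}^N δ_{x_i} and μ₁ := (1/N)Σ_{i=1}^N δ_{p_i}. Then the tropical energy satisfies E_trop^{(N)}(x₁,…,x_N) := (1/N)·max_{σ∈S_N} Σ_{i=1}^N ⟨x_i, p_{σ(i)}⟩ = −C(μ₀,μ₁), i.e. it equals minus the optimal transport cost between the two empirical measures for the cost function c(x,y) = −⟨x,y⟩. -/

import Mathlib

open MeasureTheory Filter Topology
open scoped ENNReal NNReal RealInnerProductSpace

/-- The empirical measure `(1/N) ∑ δ_{x i}` of a configuration in `ℝⁿ`. -/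
noncomputable def empiricalE {n : ℕ} (N : ℕ) (x : Fin N → EuclideanSpace ℝ (Fin n)) :
    Measure (EuclideanSpace ℝ (Fin n)) :=
  (N : ℝ≥0∞)⁻¹ • ∑ i : Fin N, Measure.dirac (x i)

/-- The optimal transport cost between `μ₀` and `μ₁` for the cost `c(x,y) = -⟨x,y⟩`. -/
noncomputable def otCost {n : ℕ} (μ₀ μ₁ : Measure (EuclideanSpace ℝ (Fin n))) : ℝ :=
  sInf {c : ℝ | ∃ γ : Measure (EuclideanSpace ℝ (Fin n) × EuclideanSpace ℝ (Fin n)),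
    IsProbabilityMeasure γ ∧ γ.map Prod.fst = μ₀ ∧ γ.map Prod.snd = μ₁ ∧
    c = ∫ q, -⟪q.1, q.2⟫ ∂γ}


open Finset
open scoped Classical

lemma my_integrable_dirac {α E : Type*} [MeasurableSpace α] [MeasurableSingletonClass α]
    [NormedAddCommGroup E] {f : α → E} (hf : StronglyMeasurable f) (a : α) :
    Integrable f (Measure.dirac a) := by
  refine ⟨hf.aestronglyMeasurable, ?_⟩
  rw [HasFiniteIntegral, lintegral_dirac]
  exact ENNReal.coe_lt_top

lemma my_sum_div_card {α β : Type*} [Fintype α] (g : α → β) (h : β → ℝ) :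
    ∑ a, h (g a) / ((Finset.univ.filter fun a' => g a' = g a).card : ℝ)
      = ∑ b ∈ Finset.univ.image g, h b := by
  rw [Finset.sum_comp (fun b => h b / ((Finset.univ.filter fun a' => g a' = b).card : ℝ)) g]
  refine Finset.sum_congr rfl fun b hb => ?_
  obtain ⟨a, -, rfl⟩ := Finset.mem_image.mp hb
  have hc : 0 < ((Finset.univ.filter fun a' => g a' = g a).card : ℝ) := by
    have : a ∈ Finset.univ.filter fun a' => g a' = g a := by simp
    exact_mod_cast Finset.card_pos.mpr ⟨a, this⟩
  rw [nsmul_eq_mul]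
  field_simp

lemma my_birkhoff_bound {N : ℕ} {D : Matrix (Fin N) (Fin N) ℝ}
    (hD : D ∈ doublyStochastic ℝ (Fin N)) (c : Fin N → Fin N → ℝ) {m : ℝ}
    (hm : ∀ σ : Equiv.Perm (Fin N), ∑ i, c i (σ i) ≤ m) :
    ∑ i, ∑ j, D i j * c i j ≤ m := by
  obtain ⟨w, hw0, hw1, hsum⟩ := exists_eq_sum_perm_of_mem_doublyStochastic hD
  have hD' : ∀ i j, D i j = ∑ σ : Equiv.Perm (Fin N), w σ * (σ.permMatrix ℝ i j) := by
    intro i j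
    rw [← hsum]
    simp [Matrix.sum_apply]
  calc ∑ i, ∑ j, D i j * c i j
      = ∑ i, ∑ j, ∑ σ : Equiv.Perm (Fin N), w σ * (σ.permMatrix ℝ i j * c i j) := by
        simp_rw [hD', Finset.sum_mul, mul_assoc]
    _ = ∑ i, ∑ σ : Equiv.Perm (Fin N), ∑ j, w σ * (σ.permMatrix ℝ i j * c i j) :=
        Finset.sum_congr rfl fun i _ => Finset.sum_comm
    _ = ∑ σ : Equiv.Perm (Fin N), ∑ i, ∑ j, w σ * (σ.permMatrix ℝ i j * c i j) :=
        Finset.sum_comm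
    _ = ∑ σ : Equiv.Perm (Fin N), w σ * ∑ i, c i (σ i) := by
        refine Finset.sum_congr rfl fun σ _ => ?_
        rw [Finset.mul_sum]
        refine Finset.sum_congr rfl fun i _ => ?_
        rw [← Finset.mul_sum]
        congr 1
        simp [Equiv.Perm.permMatrix, PEquiv.toMatrix_apply, Equiv.toPEquiv_apply]
    _ ≤ ∑ σ : Equiv.Perm (Fin N), w σ * m := by
        exact Finset.sum_le_sum fun σ _ => mul_le_mul_of_nonneg_left (hm σ) (hw0 σ)
    _ = m := by rw [← Finset.sum_mul, hw1, one_mul]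

variable {n N : ℕ}

lemma my_contF : Continuous (fun q : (EuclideanSpace ℝ (Fin n)) × (EuclideanSpace ℝ (Fin n)) => -⟪q.1, q.2⟫) :=
  (continuous_fst.inner continuous_snd).neg

lemma my_empiricalE_apply (x : Fin N → EuclideanSpace ℝ (Fin n)) {s : Set (EuclideanSpace ℝ (Fin n))}
    (hs : MeasurableSet s) :
    empiricalE N x s = (N : ℝ≥0∞)⁻¹ * ∑ i, s.indicator 1 (x i) := by
  simp [empiricalE, Measure.smul_apply, Measure.finset_sum_apply, Measure.dirac_apply' _ hs,
    smul_eq_mul]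

lemma my_empiricalE_singleton (x : Fin N → EuclideanSpace ℝ (Fin n)) (a : EuclideanSpace ℝ (Fin n)) :
    empiricalE N x {a} = (N : ℝ≥0∞)⁻¹ * ((Finset.univ.filter fun i => x i = a).card : ℝ≥0∞) := by
  classical
  rw [my_empiricalE_apply x (measurableSet_singleton a)]
  congr 1
  rw [Finset.card_filter]
  push_cast
  refine Finset.sum_congr rfl fun i _ => ?_
  by_cases h : x i = a <;> simp [Set.indicator_apply, h]

lemma my_empiricalE_compl (x : Fin N → EuclideanSpace ℝ (Fin n)) :
    empiricalE N x ((Finset.univ.image x : Finset (EuclideanSpace ℝ (Fin n))) : Set _)ᶜ = 0 := by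
  classical
  rw [my_empiricalE_apply x (Finset.finite_toSet _).measurableSet.compl]
  have : ∀ i, ((Finset.univ.image x : Finset (EuclideanSpace ℝ (Fin n))) : Set _)ᶜ.indicator
      (1 : EuclideanSpace ℝ (Fin n) → ℝ≥0∞) (x i) = 0 := by
    intro i
    have : x i ∈ ((Finset.univ.image x : Finset (EuclideanSpace ℝ (Fin n))) : Set _) := by
      simp
    simp [Set.indicator_apply, this]
  simp [this]

lemma my_perm_coupling (hN : 0 < N) (x p : Fin N → EuclideanSpace ℝ (Fin n))
    (σ₀ : Equiv.Perm (Fin N)) :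
    ∃ γ : Measure (EuclideanSpace ℝ (Fin n) × EuclideanSpace ℝ (Fin n)),
      IsProbabilityMeasure γ ∧ γ.map Prod.fst = empiricalE N x ∧
      γ.map Prod.snd = empiricalE N p ∧
      (-(1 / (N:ℝ)) * ∑ i, ⟪x i, p (σ₀ i)⟫) = ∫ q, -⟪q.1, q.2⟫ ∂γ := by
  classical
  have hN0 : (N : ℝ≥0∞) ≠ 0 := Nat.cast_ne_zero.mpr hN.ne'
  set γ : Measure (EuclideanSpace ℝ (Fin n) × EuclideanSpace ℝ (Fin n)) :=
    (N : ℝ≥0∞)⁻¹ • ∑ i : Fin N, Measure.dirac (x i, p (σ₀ i)) with hγ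
  have hprob : IsProbabilityMeasure γ := by
    constructor
    rw [hγ]
    simp [Measure.smul_apply, Measure.finset_sum_apply, smul_eq_mul]
    exact ENNReal.inv_mul_cancel hN0 (by simp)
  refine ⟨γ, hprob, ?_, ?_, ?_⟩
  · ext s hs
    rw [Measure.map_apply measurable_fst hs, my_empiricalE_apply x hs, hγ]
    simp [Measure.smul_apply, Measure.finset_sum_apply,
      Measure.dirac_apply' _ (measurable_fst hs), smul_eq_mul, Set.indicator_apply]
  · ext s hs
    rw [Measure.map_apply measurable_snd hs, my_empiricalE_apply p hs, hγ]
    simp only [Measure.smul_apply, Measure.finset_sum_apply,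
      Measure.dirac_apply' _ (measurable_snd hs), smul_eq_mul]
    congr 1
    rw [← Equiv.sum_comp σ₀ (fun j => s.indicator (1 : EuclideanSpace ℝ (Fin n) → ℝ≥0∞) (p j))]
    refine Finset.sum_congr rfl fun i _ => ?_
    simp [Set.indicator_apply, Set.mem_preimage]
  · rw [hγ, integral_smul_measure, integral_finset_sum_measure
      (fun i _ => my_integrable_dirac my_contF.stronglyMeasurable _)]
    simp only [integral_dirac]
    simp [ENNReal.toReal_inv, Finset.mul_sum, Finset.sum_neg_distrib]

set_option maxHeartbeats 1000000 in
lemma my_lower_bound {n N : ℕ} (hN : 0 < N) (x p : Fin N → (EuclideanSpace ℝ (Fin n)))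
    (γ : Measure ((EuclideanSpace ℝ (Fin n)) × (EuclideanSpace ℝ (Fin n))))
    (hprob : IsProbabilityMeasure γ)
    (hm0 : γ.map Prod.fst = empiricalE N x) (hm1 : γ.map Prod.snd = empiricalE N p) :
    -((1 / (N : ℝ)) *
        (Finset.univ : Finset (Equiv.Perm (Fin N))).sup' Finset.univ_nonempty
          (fun σ => ∑ i, ⟪x i, p (σ i)⟫)) ≤ ∫ q, -⟪q.1, q.2⟫ ∂γ := by
  classical
  set f : (EuclideanSpace ℝ (Fin n)) × (EuclideanSpace ℝ (Fin n)) → ℝ := fun q => -⟪q.1, q.2⟫ with hf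
  set Sx : Finset (EuclideanSpace ℝ (Fin n)) := Finset.univ.image x with hSx
  set Sp : Finset (EuclideanSpace ℝ (Fin n)) := Finset.univ.image p with hSp
  set cntx : (EuclideanSpace ℝ (Fin n)) → ℕ := fun a => (Finset.univ.filter fun i => x i = a).card with hcntx
  set cntp : (EuclideanSpace ℝ (Fin n)) → ℕ := fun b => (Finset.univ.filter fun j => p j = b).card with hcntp
  have hNR : (0 : ℝ) < N := by exact_mod_cast hN
  have hSxm : MeasurableSet (↑Sx : Set (EuclideanSpace ℝ (Fin n))) := Sx.finite_toSet.measurableSet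
  have hSpm : MeasurableSet (↑Sp : Set (EuclideanSpace ℝ (Fin n))) := Sp.finite_toSet.measurableSet
  have hfst : γ (Prod.fst ⁻¹' (↑Sx : Set (EuclideanSpace ℝ (Fin n)))ᶜ) = 0 := by
    rw [← Measure.map_apply measurable_fst hSxm.compl, hm0, hSx]
    exact my_empiricalE_compl x
  have hsnd : γ (Prod.snd ⁻¹' (↑Sp : Set (EuclideanSpace ℝ (Fin n)))ᶜ) = 0 := by
    rw [← Measure.map_apply measurable_snd hSpm.compl, hm1, hSp]
    exact my_empiricalE_compl p
  -- γ is concentrated on the finite set Sx ×ˢ Sp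
  have hS : γ ((↑(Sx ×ˢ Sp) : Set ((EuclideanSpace ℝ (Fin n)) × (EuclideanSpace ℝ (Fin n))))ᶜ) = 0 := by
    have hsub : (↑(Sx ×ˢ Sp) : Set ((EuclideanSpace ℝ (Fin n)) × (EuclideanSpace ℝ (Fin n))))ᶜ ⊆
        Prod.fst ⁻¹' (↑Sx : Set (EuclideanSpace ℝ (Fin n)))ᶜ ∪ Prod.snd ⁻¹' (↑Sp : Set (EuclideanSpace ℝ (Fin n)))ᶜ := by
      intro q hq
      simp only [Set.mem_compl_iff, Finset.coe_product, Set.mem_prod, not_and_or] at hq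
      rcases hq with h | h
      · exact Or.inl h
      · exact Or.inr h
    refine le_antisymm ?_ zero_le
    calc γ ((↑(Sx ×ˢ Sp) : Set ((EuclideanSpace ℝ (Fin n)) × (EuclideanSpace ℝ (Fin n))))ᶜ) ≤ γ (Prod.fst ⁻¹' (↑Sx : Set (EuclideanSpace ℝ (Fin n)))ᶜ ∪
          Prod.snd ⁻¹' (↑Sp : Set (EuclideanSpace ℝ (Fin n)))ᶜ) := measure_mono hsub
      _ ≤ γ (Prod.fst ⁻¹' (↑Sx : Set (EuclideanSpace ℝ (Fin n)))ᶜ) + γ (Prod.snd ⁻¹' (↑Sp : Set (EuclideanSpace ℝ (Fin n)))ᶜ) := measure_union_le _ _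
      _ = 0 := by rw [hfst, hsnd, add_zero]
  have γres : γ.restrict (↑(Sx ×ˢ Sp) : Set ((EuclideanSpace ℝ (Fin n)) × (EuclideanSpace ℝ (Fin n)))) = γ :=
    Measure.restrict_eq_self_of_ae_mem (MeasureTheory.mem_ae_iff.mpr hS)
  have hint : Integrable f γ := by
    refine ⟨my_contF.aestronglyMeasurable, ?_⟩
    rw [HasFiniteIntegral, ← γres, lintegral_finset]
    exact ENNReal.sum_lt_top.mpr fun q _ =>
      ENNReal.mul_lt_top ENNReal.coe_lt_top (measure_lt_top γ _)
  have hintegral : ∫ q, f q ∂γ = ∑ q ∈ Sx ×ˢ Sp, (γ {q}).toReal • f q := by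
    conv_lhs => rw [← γres]
    exact integral_finset _ (by rw [IntegrableOn, γres]; exact hint)
  -- masses
  set m : (EuclideanSpace ℝ (Fin n)) → (EuclideanSpace ℝ (Fin n)) → ℝ := fun a b => (γ {(a, b)}).toReal with hm
  have hrowE : ∀ a : (EuclideanSpace ℝ (Fin n)), (∑ b ∈ Sp, γ {(a, b)}) = (N : ℝ≥0∞)⁻¹ * (cntx a : ℝ≥0∞) := by
    intro a
    have h1 : γ (Prod.fst ⁻¹' ({a} : Set (EuclideanSpace ℝ (Fin n)))) = γ (({a} : Set (EuclideanSpace ℝ (Fin n))) ×ˢ (↑Sp : Set (EuclideanSpace ℝ (Fin n)))) := by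
      refine le_antisymm ?_ (measure_mono fun q hq => hq.1)
      have hsub : Prod.fst ⁻¹' ({a} : Set (EuclideanSpace ℝ (Fin n))) ⊆
          (({a} : Set (EuclideanSpace ℝ (Fin n))) ×ˢ (↑Sp : Set (EuclideanSpace ℝ (Fin n)))) ∪ Prod.snd ⁻¹' (↑Sp : Set (EuclideanSpace ℝ (Fin n)))ᶜ := by
        intro q hq
        by_cases h : q.2 ∈ (↑Sp : Set (EuclideanSpace ℝ (Fin n)))
        · exact Or.inl ⟨hq, h⟩
        · exact Or.inr h
      calc γ (Prod.fst ⁻¹' ({a} : Set (EuclideanSpace ℝ (Fin n))))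
          ≤ γ ((({a} : Set (EuclideanSpace ℝ (Fin n))) ×ˢ (↑Sp : Set (EuclideanSpace ℝ (Fin n)))) ∪ Prod.snd ⁻¹' (↑Sp : Set (EuclideanSpace ℝ (Fin n)))ᶜ) :=
            measure_mono hsub
        _ ≤ γ (({a} : Set (EuclideanSpace ℝ (Fin n))) ×ˢ (↑Sp : Set (EuclideanSpace ℝ (Fin n)))) + γ (Prod.snd ⁻¹' (↑Sp : Set (EuclideanSpace ℝ (Fin n)))ᶜ) :=
            measure_union_le _ _
        _ = γ (({a} : Set (EuclideanSpace ℝ (Fin n))) ×ˢ (↑Sp : Set (EuclideanSpace ℝ (Fin n)))) := by rw [hsnd, add_zero]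
    have h2 : (({a} : Set (EuclideanSpace ℝ (Fin n))) ×ˢ (↑Sp : Set (EuclideanSpace ℝ (Fin n)))) = ⋃ b ∈ Sp, ({(a, b)} : Set ((EuclideanSpace ℝ (Fin n)) × (EuclideanSpace ℝ (Fin n)))) := by
      ext q
      simp only [Set.mem_prod, Set.mem_singleton_iff, Set.mem_iUnion, Finset.mem_coe]
      constructor
      · rintro ⟨h1', h2'⟩
        exact ⟨q.2, h2', by rw [← h1']⟩
      · rintro ⟨b, hb, rfl⟩
        exact ⟨rfl, hb⟩
    have h3 : γ (({a} : Set (EuclideanSpace ℝ (Fin n))) ×ˢ (↑Sp : Set (EuclideanSpace ℝ (Fin n)))) = ∑ b ∈ Sp, γ {(a, b)} := by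
      rw [h2, measure_biUnion_finset ?_ fun b _ => measurableSet_singleton _]
      intro b hb b' hb' hne
      simp only [Function.onFun, Set.disjoint_singleton_left, Set.mem_singleton_iff]
      exact fun h => hne (congrArg Prod.snd h)
    have h4 : γ (Prod.fst ⁻¹' ({a} : Set (EuclideanSpace ℝ (Fin n)))) = empiricalE N x {a} := by
      rw [← hm0, Measure.map_apply measurable_fst (measurableSet_singleton a)]
    rw [← h3, ← h1, h4, my_empiricalE_singleton]
  have hcolE : ∀ b : (EuclideanSpace ℝ (Fin n)), (∑ a ∈ Sx, γ {(a, b)}) = (N : ℝ≥0∞)⁻¹ * (cntp b : ℝ≥0∞) := by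
    intro b
    have h1 : γ (Prod.snd ⁻¹' ({b} : Set (EuclideanSpace ℝ (Fin n)))) = γ ((↑Sx : Set (EuclideanSpace ℝ (Fin n))) ×ˢ ({b} : Set (EuclideanSpace ℝ (Fin n)))) := by
      refine le_antisymm ?_ (measure_mono fun q hq => hq.2)
      have hsub : Prod.snd ⁻¹' ({b} : Set (EuclideanSpace ℝ (Fin n))) ⊆
          ((↑Sx : Set (EuclideanSpace ℝ (Fin n))) ×ˢ ({b} : Set (EuclideanSpace ℝ (Fin n)))) ∪ Prod.fst ⁻¹' (↑Sx : Set (EuclideanSpace ℝ (Fin n)))ᶜ := by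
        intro q hq
        by_cases h : q.1 ∈ (↑Sx : Set (EuclideanSpace ℝ (Fin n)))
        · exact Or.inl ⟨h, hq⟩
        · exact Or.inr h
      calc γ (Prod.snd ⁻¹' ({b} : Set (EuclideanSpace ℝ (Fin n))))
          ≤ γ (((↑Sx : Set (EuclideanSpace ℝ (Fin n))) ×ˢ ({b} : Set (EuclideanSpace ℝ (Fin n)))) ∪ Prod.fst ⁻¹' (↑Sx : Set (EuclideanSpace ℝ (Fin n)))ᶜ) :=
            measure_mono hsub
        _ ≤ γ ((↑Sx : Set (EuclideanSpace ℝ (Fin n))) ×ˢ ({b} : Set (EuclideanSpace ℝ (Fin n)))) + γ (Prod.fst ⁻¹' (↑Sx : Set (EuclideanSpace ℝ (Fin n)))ᶜ) :=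
            measure_union_le _ _
        _ = γ ((↑Sx : Set (EuclideanSpace ℝ (Fin n))) ×ˢ ({b} : Set (EuclideanSpace ℝ (Fin n)))) := by rw [hfst, add_zero]
    have h2 : ((↑Sx : Set (EuclideanSpace ℝ (Fin n))) ×ˢ ({b} : Set (EuclideanSpace ℝ (Fin n)))) = ⋃ a ∈ Sx, ({(a, b)} : Set ((EuclideanSpace ℝ (Fin n)) × (EuclideanSpace ℝ (Fin n)))) := by
      ext q
      simp only [Set.mem_prod, Set.mem_singleton_iff, Set.mem_iUnion, Finset.mem_coe]
      constructor
      · rintro ⟨h1', h2'⟩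
        exact ⟨q.1, h1', by rw [← h2']⟩
      · rintro ⟨a, ha, rfl⟩
        exact ⟨ha, rfl⟩
    have h3 : γ ((↑Sx : Set (EuclideanSpace ℝ (Fin n))) ×ˢ ({b} : Set (EuclideanSpace ℝ (Fin n)))) = ∑ a ∈ Sx, γ {(a, b)} := by
      rw [h2, measure_biUnion_finset ?_ fun a _ => measurableSet_singleton _]
      intro a ha a' ha' hne
      simp only [Function.onFun, Set.disjoint_singleton_left, Set.mem_singleton_iff]
      exact fun h => hne (congrArg Prod.fst h)
    have h4 : γ (Prod.snd ⁻¹' ({b} : Set (EuclideanSpace ℝ (Fin n)))) = empiricalE N p {b} := by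
      rw [← hm1, Measure.map_apply measurable_snd (measurableSet_singleton b)]
    rw [← h3, ← h1, h4, my_empiricalE_singleton]
  have hrowR : ∀ a : (EuclideanSpace ℝ (Fin n)), ∑ b ∈ Sp, m a b = (cntx a : ℝ) / N := by
    intro a
    have h := congrArg ENNReal.toReal (hrowE a)
    rw [ENNReal.toReal_sum (fun b _ => (measure_lt_top γ _).ne), ENNReal.toReal_mul,
      ENNReal.toReal_inv, ENNReal.toReal_natCast, ENNReal.toReal_natCast] at h
    rw [hm]
    simpa [inv_mul_eq_div] using h
  have hcolR : ∀ b : (EuclideanSpace ℝ (Fin n)), ∑ a ∈ Sx, m a b = (cntp b : ℝ) / N := by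
    intro b
    have h := congrArg ENNReal.toReal (hcolE b)
    rw [ENNReal.toReal_sum (fun a _ => (measure_lt_top γ _).ne), ENNReal.toReal_mul,
      ENNReal.toReal_inv, ENNReal.toReal_natCast, ENNReal.toReal_natCast] at h
    rw [hm]
    simpa [inv_mul_eq_div] using h
  -- the rescaled matrix is doubly stochastic
  set D : Matrix (Fin N) (Fin N) ℝ :=
    fun i j => (N : ℝ) * m (x i) (p j) / ((cntx (x i) : ℝ) * (cntp (p j) : ℝ)) with hD
  have hcx : ∀ i, (0 : ℝ) < (cntx (x i) : ℝ) := by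
    intro i
    have : i ∈ Finset.univ.filter fun i' => x i' = x i := by simp
    exact_mod_cast Finset.card_pos.mpr ⟨i, this⟩
  have hcp : ∀ j, (0 : ℝ) < (cntp (p j) : ℝ) := by
    intro j
    have : j ∈ Finset.univ.filter fun j' => p j' = p j := by simp
    exact_mod_cast Finset.card_pos.mpr ⟨j, this⟩
  have hDmem : D ∈ doublyStochastic ℝ (Fin N) := by
    rw [mem_doublyStochastic_iff_sum]
    refine ⟨fun i j => ?_, fun i => ?_, fun j => ?_⟩
    · show (0:ℝ) ≤ (N : ℝ) * m (x i) (p j) / ((cntx (x i) : ℝ) * (cntp (p j) : ℝ))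
      exact div_nonneg (mul_nonneg (Nat.cast_nonneg N) ENNReal.toReal_nonneg)
        (mul_nonneg (Nat.cast_nonneg _) (Nat.cast_nonneg _))
    · have step : ∀ j, D i j =
          (fun b => (N : ℝ) * m (x i) b / (cntx (x i) : ℝ)) (p j) /
            ((Finset.univ.filter fun j' => p j' = p j).card : ℝ) := by
        intro j
        show (N : ℝ) * m (x i) (p j) / ((cntx (x i) : ℝ) * (cntp (p j) : ℝ)) = _
        rw [← div_div]
      calc ∑ j, D i j = ∑ j, (fun b => (N : ℝ) * m (x i) b / (cntx (x i) : ℝ)) (p j) /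
            ((Finset.univ.filter fun j' => p j' = p j).card : ℝ) :=
            Finset.sum_congr rfl fun j _ => step j
        _ = ∑ b ∈ Finset.univ.image p, (N : ℝ) * m (x i) b / (cntx (x i) : ℝ) :=
            by convert my_sum_div_card p (fun b => (N : ℝ) * m (x i) b / (cntx (x i) : ℝ))
        _ = (N : ℝ) * (∑ b ∈ Sp, m (x i) b) / (cntx (x i) : ℝ) := by
            rw [← Finset.sum_div, ← Finset.mul_sum, hSp]
        _ = 1 := by
            rw [hrowR (x i), mul_div_assoc', mul_comm, mul_div_assoc, div_self (hNR.ne' : (N:ℝ) ≠ 0) ]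
            rw [mul_one, div_self (hcx i).ne']
    · have step : ∀ i, D i j =
          (fun a => (N : ℝ) * m a (p j) / (cntp (p j) : ℝ)) (x i) /
            ((Finset.univ.filter fun i' => x i' = x i).card : ℝ) := by
        intro i
        show (N : ℝ) * m (x i) (p j) / ((cntx (x i) : ℝ) * (cntp (p j) : ℝ)) = _
        rw [mul_comm ((cntx (x i) : ℝ)), ← div_div]
      calc ∑ i, D i j = ∑ i, (fun a => (N : ℝ) * m a (p j) / (cntp (p j) : ℝ)) (x i) /
            ((Finset.univ.filter fun i' => x i' = x i).card : ℝ) :=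
            Finset.sum_congr rfl fun i _ => step i
        _ = ∑ a ∈ Finset.univ.image x, (N : ℝ) * m a (p j) / (cntp (p j) : ℝ) :=
            by convert my_sum_div_card x (fun a => (N : ℝ) * m a (p j) / (cntp (p j) : ℝ))
        _ = (N : ℝ) * (∑ a ∈ Sx, m a (p j)) / (cntp (p j) : ℝ) := by
            rw [← Finset.sum_div, ← Finset.mul_sum, hSx]
        _ = 1 := by
            rw [hcolR (p j), mul_div_assoc', mul_comm, mul_div_assoc, div_self (hNR.ne' : (N:ℝ) ≠ 0) ]
            rw [mul_one, div_self (hcp j).ne']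
  have hB : ∑ i, ∑ j, D i j * ⟪x i, p j⟫ ≤
      (Finset.univ : Finset (Equiv.Perm (Fin N))).sup' Finset.univ_nonempty
        (fun σ => ∑ i, ⟪x i, p (σ i)⟫) :=
    my_birkhoff_bound hDmem (fun i j => ⟪x i, p j⟫)
      (fun σ => by exact Finset.le_sup' (fun σ => ∑ i, ⟪x i, p (σ i)⟫) (Finset.mem_univ σ))
  have key : ∑ i, ∑ j, D i j * ⟪x i, p j⟫ =
      (N : ℝ) * ∑ a ∈ Sx, ∑ b ∈ Sp, m a b * ⟪a, b⟫ := by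
    have stepA : ∀ i, ∑ j, D i j * ⟪x i, p j⟫ =
        (fun a => (N : ℝ) * (∑ b ∈ Sp, m a b * ⟪a, b⟫)) (x i) /
          ((Finset.univ.filter fun i' => x i' = x i).card : ℝ) := by
      intro i
      have step : ∀ j, D i j * ⟪x i, p j⟫ =
          (fun b => (N : ℝ) * (m (x i) b * ⟪x i, b⟫) / (cntx (x i) : ℝ)) (p j) /
            ((Finset.univ.filter fun j' => p j' = p j).card : ℝ) := by
        intro j
        show (N : ℝ) * m (x i) (p j) / ((cntx (x i) : ℝ) * (cntp (p j) : ℝ)) * ⟪x i, p j⟫ =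
          (N : ℝ) * (m (x i) (p j) * ⟪x i, p j⟫) / (cntx (x i) : ℝ) / ((cntp (p j) : ℝ))
        field_simp
      calc ∑ j, D i j * ⟪x i, p j⟫
          = ∑ j, (fun b => (N : ℝ) * (m (x i) b * ⟪x i, b⟫) / (cntx (x i) : ℝ)) (p j) /
            ((Finset.univ.filter fun j' => p j' = p j).card : ℝ) :=
            Finset.sum_congr rfl fun j _ => step j
        _ = ∑ b ∈ Finset.univ.image p, (N : ℝ) * (m (x i) b * ⟪x i, b⟫) / (cntx (x i) : ℝ) :=
            by convert my_sum_div_card p (fun b => (N : ℝ) * (m (x i) b * ⟪x i, b⟫) / (cntx (x i) : ℝ))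
        _ = (N : ℝ) * (∑ b ∈ Sp, m (x i) b * ⟪x i, b⟫) / (cntx (x i) : ℝ) := by
            rw [← Finset.sum_div, ← Finset.mul_sum, hSp]
    calc ∑ i, ∑ j, D i j * ⟪x i, p j⟫
        = ∑ i, (fun a => (N : ℝ) * (∑ b ∈ Sp, m a b * ⟪a, b⟫)) (x i) /
          ((Finset.univ.filter fun i' => x i' = x i).card : ℝ) :=
          Finset.sum_congr rfl fun i _ => stepA i
      _ = ∑ a ∈ Finset.univ.image x, (N : ℝ) * (∑ b ∈ Sp, m a b * ⟪a, b⟫) :=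
          by convert my_sum_div_card x (fun a => (N : ℝ) * ∑ b ∈ Sp, m a b * ⟪a, b⟫)
      _ = (N : ℝ) * ∑ a ∈ Sx, ∑ b ∈ Sp, m a b * ⟪a, b⟫ := by
          rw [← Finset.mul_sum, hSx]
  have hintegral2 : ∫ q, f q ∂γ = -∑ a ∈ Sx, ∑ b ∈ Sp, m a b * ⟪a, b⟫ := by
    rw [hintegral, Finset.sum_product]
    simp only [smul_eq_mul, hf, mul_neg, Finset.sum_neg_distrib, hm]
  show -((1 / (N : ℝ)) *
      (Finset.univ : Finset (Equiv.Perm (Fin N))).sup' Finset.univ_nonempty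
        (fun σ => ∑ i, ⟪x i, p (σ i)⟫)) ≤ ∫ q, f q ∂γ
  rw [hintegral2]
  have h1 : ∑ a ∈ Sx, ∑ b ∈ Sp, m a b * ⟪a, b⟫ =
      (1 / (N : ℝ)) * ∑ i, ∑ j, D i j * ⟪x i, p j⟫ := by
    rw [key]
    field_simp
  rw [h1]
  have := mul_le_mul_of_nonneg_left hB (by positivity : (0:ℝ) ≤ 1 / (N : ℝ))
  linarith

/-- The tropical energy `E_trop^{(N)}(x) = (1/N) max_σ ∑ ⟨x_i, p_{σ(i)}⟩`
equals minus the optimal transport cost (for the cost `c(x,y) = -⟨x,y⟩`) between the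
empirical measures of `(x_i)` and of `(p_i)`. -/
theorem tropical_energy_eq_neg_transport_cost
    {n N : ℕ} (hN : 0 < N) (x p : Fin N → EuclideanSpace ℝ (Fin n)) :
    (1 / (N : ℝ)) *
        (Finset.univ : Finset (Equiv.Perm (Fin N))).sup' Finset.univ_nonempty
          (fun σ => ∑ i, ⟪x i, p (σ i)⟫)
      = - otCost (empiricalE N x) (empiricalE N p) := by
  classical
  obtain ⟨σ₀, hσ₀⟩ := Finset.exists_mem_eq_sup' (Finset.univ_nonempty :
    (Finset.univ : Finset (Equiv.Perm (Fin N))).Nonempty) (fun σ => ∑ i, ⟪x i, p (σ i)⟫)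
  have hmem : -((1 / (N : ℝ)) *
      (Finset.univ : Finset (Equiv.Perm (Fin N))).sup' Finset.univ_nonempty
        (fun σ => ∑ i, ⟪x i, p (σ i)⟫)) ∈
      {c : ℝ | ∃ γ : Measure (EuclideanSpace ℝ (Fin n) × EuclideanSpace ℝ (Fin n)),
        IsProbabilityMeasure γ ∧ γ.map Prod.fst = empiricalE N x ∧
        γ.map Prod.snd = empiricalE N p ∧ c = ∫ q, -⟪q.1, q.2⟫ ∂γ} := by
    obtain ⟨γ, h1, h2, h3, h4⟩ := my_perm_coupling hN x p σ₀
    exact ⟨γ, h1, h2, h3, by rw [← h4, hσ₀.2, neg_mul]⟩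
  have hlow : ∀ c ∈ {c : ℝ | ∃ γ : Measure (EuclideanSpace ℝ (Fin n) × EuclideanSpace ℝ (Fin n)),
        IsProbabilityMeasure γ ∧ γ.map Prod.fst = empiricalE N x ∧
        γ.map Prod.snd = empiricalE N p ∧ c = ∫ q, -⟪q.1, q.2⟫ ∂γ},
      -((1 / (N : ℝ)) *
        (Finset.univ : Finset (Equiv.Perm (Fin N))).sup' Finset.univ_nonempty
          (fun σ => ∑ i, ⟪x i, p (σ i)⟫)) ≤ c := by
    rintro c ⟨γ, h1, h2, h3, rfl⟩
    exact my_lower_bound hN x p γ h1 h2 h3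
  have hcost : otCost (empiricalE N x) (empiricalE N p) =
      -((1 / (N : ℝ)) *
        (Finset.univ : Finset (Equiv.Perm (Fin N))).sup' Finset.univ_nonempty
          (fun σ => ∑ i, ⟪x i, p (σ i)⟫)) := by
    rw [otCost]
    exact le_antisymm (csInf_le ⟨_, hlow⟩ hmem) (le_csInf ⟨_, hmem⟩ hlow)
  rw [hcost, neg_neg]
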